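/- If ρ₁₂ is a separable density matrix on ℂ^{d₁}⊗ℂ^{d₂} obtained as a reduced state, and W₁ ⪰ W̃₁ ⪰ 0, W₂ ⪰ W̃₂ ⪰ 0, then Tr(ρ₁₂(W₁⊗W₂)) ≥ Tr(ρ₁₂(W̃₁⊗W̃₂)). Consequently, if for a tripartite state ρ every pair (k,k') of subsystems has a witness 𝒲^{(k,k')} = (W_k⊗W_{k'} − W̃_k⊗W̃_{k'})⊗I with Tr(𝒲^{(k,k')}ρ) < 0, then ρ is genuinely multipartite entangled (not biseparable across any bipartition). -/

import Mathlib

open ComplexOrder Matrix Kronecker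

section

variable {d₁ d₂ d₃ : ℕ}

/-- A bipartite density matrix is separable if it is a finite convex combination of
product density matrices. -/
def SepState {e₁ e₂ : ℕ} (σ : Matrix (Fin e₁ × Fin e₂) (Fin e₁ × Fin e₂) ℂ) : Prop :=
  ∃ (m : ℕ) (lam : Fin m → ℝ) (σ₁ : Fin m → Matrix (Fin e₁) (Fin e₁) ℂ)
    (σ₂ : Fin m → Matrix (Fin e₂) (Fin e₂) ℂ),
    (∀ q, 0 ≤ lam q) ∧ (∑ q, lam q = 1) ∧
    (∀ q, (σ₁ q).PosSemidef ∧ (σ₁ q).trace = 1) ∧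
    (∀ q, (σ₂ q).PosSemidef ∧ (σ₂ q).trace = 1) ∧
    σ = ∑ q, (lam q : ℂ) • (σ₁ q ⊗ₖ σ₂ q)

/-- Embed `A ⊗ B` for the bipartition `1|23` into the tripartite space. -/
def split1 (A : Matrix (Fin d₁) (Fin d₁) ℂ)
    (B : Matrix (Fin d₂ × Fin d₃) (Fin d₂ × Fin d₃) ℂ) :
    Matrix (Fin d₁ × Fin d₂ × Fin d₃) (Fin d₁ × Fin d₂ × Fin d₃) ℂ :=
  Matrix.of fun x y => A x.1 y.1 * B x.2 y.2

/-- Embed `A ⊗ B` for the bipartition `2|13` into the tripartite space. -/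
def split2 (A : Matrix (Fin d₂) (Fin d₂) ℂ)
    (B : Matrix (Fin d₁ × Fin d₃) (Fin d₁ × Fin d₃) ℂ) :
    Matrix (Fin d₁ × Fin d₂ × Fin d₃) (Fin d₁ × Fin d₂ × Fin d₃) ℂ :=
  Matrix.of fun x y => A x.2.1 y.2.1 * B (x.1, x.2.2) (y.1, y.2.2)

/-- Embed `A ⊗ B` for the bipartition `3|12` into the tripartite space. -/
def split3 (A : Matrix (Fin d₃) (Fin d₃) ℂ)
    (B : Matrix (Fin d₁ × Fin d₂) (Fin d₁ × Fin d₂) ℂ) :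
    Matrix (Fin d₁ × Fin d₂ × Fin d₃) (Fin d₁ × Fin d₂ × Fin d₃) ℂ :=
  Matrix.of fun x y => A x.2.2 y.2.2 * B (x.1, x.2.1) (y.1, y.2.1)

/-- `ρ` is biseparable across the bipartition `1|23`. -/
def Bisep1 (ρ : Matrix (Fin d₁ × Fin d₂ × Fin d₃) (Fin d₁ × Fin d₂ × Fin d₃) ℂ) : Prop :=
  ∃ (m : ℕ) (lam : Fin m → ℝ) (ρA : Fin m → Matrix (Fin d₁) (Fin d₁) ℂ)
    (ρB : Fin m → Matrix (Fin d₂ × Fin d₃) (Fin d₂ × Fin d₃) ℂ),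
    (∀ q, 0 ≤ lam q) ∧ (∑ q, lam q = 1) ∧
    (∀ q, (ρA q).PosSemidef ∧ (ρA q).trace = 1) ∧
    (∀ q, (ρB q).PosSemidef ∧ (ρB q).trace = 1) ∧
    ρ = ∑ q, (lam q : ℂ) • split1 (ρA q) (ρB q)

/-- `ρ` is biseparable across the bipartition `2|13`. -/
def Bisep2 (ρ : Matrix (Fin d₁ × Fin d₂ × Fin d₃) (Fin d₁ × Fin d₂ × Fin d₃) ℂ) : Prop :=
  ∃ (m : ℕ) (lam : Fin m → ℝ) (ρA : Fin m → Matrix (Fin d₂) (Fin d₂) ℂ)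
    (ρB : Fin m → Matrix (Fin d₁ × Fin d₃) (Fin d₁ × Fin d₃) ℂ),
    (∀ q, 0 ≤ lam q) ∧ (∑ q, lam q = 1) ∧
    (∀ q, (ρA q).PosSemidef ∧ (ρA q).trace = 1) ∧
    (∀ q, (ρB q).PosSemidef ∧ (ρB q).trace = 1) ∧
    ρ = ∑ q, (lam q : ℂ) • split2 (ρA q) (ρB q)

/-- `ρ` is biseparable across the bipartition `3|12`. -/
def Bisep3 (ρ : Matrix (Fin d₁ × Fin d₂ × Fin d₃) (Fin d₁ × Fin d₂ × Fin d₃) ℂ) : Prop :=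
  ∃ (m : ℕ) (lam : Fin m → ℝ) (ρA : Fin m → Matrix (Fin d₃) (Fin d₃) ℂ)
    (ρB : Fin m → Matrix (Fin d₁ × Fin d₂) (Fin d₁ × Fin d₂) ℂ),
    (∀ q, 0 ≤ lam q) ∧ (∑ q, lam q = 1) ∧
    (∀ q, (ρA q).PosSemidef ∧ (ρA q).trace = 1) ∧
    (∀ q, (ρB q).PosSemidef ∧ (ρB q).trace = 1) ∧
    ρ = ∑ q, (lam q : ℂ) • split3 (ρA q) (ρB q)

/-- The operator `X` on subsystems `(1,2)` tensored with the identity on subsystem `3`. -/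
def pad12 (X : Matrix (Fin d₁ × Fin d₂) (Fin d₁ × Fin d₂) ℂ) :
    Matrix (Fin d₁ × Fin d₂ × Fin d₃) (Fin d₁ × Fin d₂ × Fin d₃) ℂ :=
  Matrix.of fun x y => X (x.1, x.2.1) (y.1, y.2.1) * (if x.2.2 = y.2.2 then 1 else 0)

/-- The operator `X` on subsystems `(1,3)` tensored with the identity on subsystem `2`. -/
def pad13 (X : Matrix (Fin d₁ × Fin d₃) (Fin d₁ × Fin d₃) ℂ) :
    Matrix (Fin d₁ × Fin d₂ × Fin d₃) (Fin d₁ × Fin d₂ × Fin d₃) ℂ :=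
  Matrix.of fun x y => X (x.1, x.2.2) (y.1, y.2.2) * (if x.2.1 = y.2.1 then 1 else 0)

/-- The operator `X` on subsystems `(2,3)` tensored with the identity on subsystem `1`. -/
def pad23 (X : Matrix (Fin d₂ × Fin d₃) (Fin d₂ × Fin d₃) ℂ) :
    Matrix (Fin d₁ × Fin d₂ × Fin d₃) (Fin d₁ × Fin d₂ × Fin d₃) ℂ :=
  Matrix.of fun x y => X x.2 y.2 * (if x.1 = y.1 then 1 else 0)


lemma trace_nonneg_of_posSemidef {n : Type*} [Fintype n] [DecidableEq n]
    {A : Matrix n n ℂ} (hA : A.PosSemidef) : 0 ≤ A.trace := by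
  rw [Matrix.trace]
  apply Finset.sum_nonneg
  intro i _
  have := hA.dotProduct_mulVec_nonneg (fun j => if j = i then 1 else 0)
  simpa [dotProduct, Matrix.mulVec, Matrix.diag] using this

lemma trace_mul_nonneg {n : Type*} [Fintype n] [DecidableEq n]
    {A B : Matrix n n ℂ} (hA : A.PosSemidef) (hB : B.PosSemidef) :
    0 ≤ (A * B).trace := by
  open MatrixOrder in obtain ⟨C, rfl⟩ := CStarAlgebra.nonneg_iff_eq_star_mul_self.mp hA.nonneg
  rw [Matrix.mul_assoc, Matrix.trace_mul_comm]
  exact trace_nonneg_of_posSemidef (hB.mul_mul_conjTranspose_same C)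

noncomputable def ptrR {α β : Type*} [Fintype β] (B : Matrix (α × β) (α × β) ℂ) :
    Matrix α α ℂ :=
  Matrix.of fun i j => ∑ k, B (i, k) (j, k)

lemma ptrR_posSemidef {α β : Type*} [Fintype α] [Fintype β] [DecidableEq α] [DecidableEq β]
    {B : Matrix (α × β) (α × β) ℂ} (hB : B.PosSemidef) : (ptrR B).PosSemidef := by
  refine Matrix.PosSemidef.of_dotProduct_mulVec_nonneg ?_ ?_
  · ext i j
    simp only [ptrR, Matrix.conjTranspose_apply, Matrix.of_apply, star_sum]
    exact Finset.sum_congr rfl fun k _ => Matrix.IsHermitian.apply hB.1 _ _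
  · intro v
    have key : star v ⬝ᵥ (ptrR B) *ᵥ v
        = ∑ k, star (fun p : α × β => if p.2 = k then v p.1 else 0) ⬝ᵥ
            B *ᵥ (fun p : α × β => if p.2 = k then v p.1 else 0) := by
      simp only [dotProduct, Matrix.mulVec, ptrR, Matrix.of_apply, Pi.star_apply,
        Fintype.sum_prod_type, apply_ite star, star_zero, ite_mul, zero_mul, mul_ite, mul_zero,
        Finset.mul_sum, Finset.sum_mul, Finset.sum_ite_eq', Finset.mem_univ, if_true]
      conv_rhs =>
        enter [2, k, 2, i]
        rw [Finset.sum_comm]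
      simp only [Finset.sum_ite_eq', Finset.mem_univ, if_true]
      conv_rhs => rw [Finset.sum_comm]
      refine Finset.sum_congr rfl fun i _ => ?_
      rw [Finset.sum_comm]
    rw [key]
    exact Finset.sum_nonneg fun k _ => hB.dotProduct_mulVec_nonneg _

lemma ptrR_trace {α β : Type*} [Fintype α] [Fintype β]
    (B : Matrix (α × β) (α × β) ℂ) : (ptrR B).trace = B.trace := by
  simp [ptrR, Matrix.trace, Matrix.diag, Fintype.sum_prod_type]

lemma sepState_le_helper {e₁ e₂ : ℕ} (ρ₁₂ : Matrix (Fin e₁ × Fin e₂) (Fin e₁ × Fin e₂) ℂ)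
    (hsep : SepState ρ₁₂)
    (W₁ Wt₁ : Matrix (Fin e₁) (Fin e₁) ℂ) (W₂ Wt₂ : Matrix (Fin e₂) (Fin e₂) ℂ)
    (h1 : (W₁ - Wt₁).PosSemidef) (h1' : Wt₁.PosSemidef)
    (h2 : (W₂ - Wt₂).PosSemidef) (h2' : Wt₂.PosSemidef) :
    (ρ₁₂ * (Wt₁ ⊗ₖ Wt₂)).trace ≤ (ρ₁₂ * (W₁ ⊗ₖ W₂)).trace := by
  obtain ⟨m, lam, σ₁, σ₂, hlam, -, hσ₁, hσ₂, rfl⟩ := hsep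
  rw [Finset.sum_mul, Finset.sum_mul, Matrix.trace_sum, Matrix.trace_sum]
  apply Finset.sum_le_sum
  intro q _
  rw [smul_mul_assoc, smul_mul_assoc, Matrix.trace_smul, Matrix.trace_smul]
  apply smul_le_smul_of_nonneg_left
  · rw [← Matrix.mul_kronecker_mul, ← Matrix.mul_kronecker_mul,
      Matrix.trace_kronecker, Matrix.trace_kronecker]
    have k1 : 0 ≤ (σ₁ q * Wt₁).trace := trace_mul_nonneg (hσ₁ q).1 h1'
    have k2 : 0 ≤ (σ₂ q * Wt₂).trace := trace_mul_nonneg (hσ₂ q).1 h2'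
    have k1' : (σ₁ q * Wt₁).trace ≤ (σ₁ q * W₁).trace := by
      have := trace_mul_nonneg (hσ₁ q).1 h1
      rw [Matrix.mul_sub, Matrix.trace_sub] at this
      exact sub_nonneg.mp this
    have k2' : (σ₂ q * Wt₂).trace ≤ (σ₂ q * W₂).trace := by
      have := trace_mul_nonneg (hσ₂ q).1 h2
      rw [Matrix.mul_sub, Matrix.trace_sub] at this
      exact sub_nonneg.mp this
    exact mul_le_mul k1' k2' k2 (k1.trans k1')
  · exact_mod_cast hlam q

lemma trace_pad12_split1 (X : Matrix (Fin d₁ × Fin d₂) (Fin d₁ × Fin d₂) ℂ)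
    (A : Matrix (Fin d₁) (Fin d₁) ℂ) (B : Matrix (Fin d₂ × Fin d₃) (Fin d₂ × Fin d₃) ℂ) :
    (pad12 (d₃ := d₃) X * split1 A B).trace = (X * (A ⊗ₖ ptrR B)).trace := by
  simp only [Matrix.trace, Matrix.diag, Matrix.mul_apply, pad12, split1, ptrR,
    Matrix.kroneckerMap_apply, Matrix.of_apply, Fintype.sum_prod_type, mul_ite, mul_one,
    mul_zero, ite_mul, zero_mul, Finset.sum_ite_eq', Finset.sum_ite_eq, Finset.mem_univ,
    if_true, Finset.mul_sum, Finset.sum_mul]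
  refine Finset.sum_congr rfl fun i _ => Finset.sum_congr rfl fun j _ => ?_
  rw [Finset.sum_comm]
  exact Finset.sum_congr rfl fun i' _ => Finset.sum_comm

lemma trace_pad12_split2 (X : Matrix (Fin d₁ × Fin d₂) (Fin d₁ × Fin d₂) ℂ)
    (A : Matrix (Fin d₂) (Fin d₂) ℂ) (B : Matrix (Fin d₁ × Fin d₃) (Fin d₁ × Fin d₃) ℂ) :
    (pad12 (d₃ := d₃) X * split2 A B).trace = (X * (ptrR B ⊗ₖ A)).trace := by
  simp only [Matrix.trace, Matrix.diag, Matrix.mul_apply, pad12, pad13, split2, split3, ptrR,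
    Matrix.kroneckerMap_apply, Matrix.of_apply, Fintype.sum_prod_type, mul_ite, mul_one,
    mul_zero, ite_mul, zero_mul, Finset.sum_ite_eq', Finset.sum_ite_eq, Finset.mem_univ,
    if_true, Finset.mul_sum, Finset.sum_mul]
  refine Finset.sum_congr rfl fun i _ => Finset.sum_congr rfl fun j _ => ?_
  rw [Finset.sum_comm]
  refine Finset.sum_congr rfl fun i' _ => ?_
  rw [Finset.sum_comm]
  exact Finset.sum_congr rfl fun j' _ => Finset.sum_congr rfl fun k _ => by ring

lemma trace_pad13_split3 (X : Matrix (Fin d₁ × Fin d₃) (Fin d₁ × Fin d₃) ℂ)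
    (A : Matrix (Fin d₃) (Fin d₃) ℂ) (B : Matrix (Fin d₁ × Fin d₂) (Fin d₁ × Fin d₂) ℂ) :
    (pad13 (d₂ := d₂) X * split3 A B).trace = (X * (ptrR B ⊗ₖ A)).trace := by
  simp only [Matrix.trace, Matrix.diag, Matrix.mul_apply, pad12, pad13, split2, split3, ptrR,
    Matrix.kroneckerMap_apply, Matrix.of_apply, Fintype.sum_prod_type, mul_ite, mul_one,
    mul_zero, ite_mul, zero_mul, Finset.sum_ite_eq', Finset.sum_ite_eq, Finset.mem_univ,
    if_true, Finset.mul_sum, Finset.sum_mul]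
  conv_lhs =>
    enter [2, x, 2, x1, 2, x2, 2, x3]
    rw [Finset.sum_comm]
  simp only [Finset.sum_ite_eq, Finset.mem_univ, if_true]
  refine Finset.sum_congr rfl fun x _ => ?_
  rw [Finset.sum_comm]
  refine Finset.sum_congr rfl fun k _ => ?_
  rw [Finset.sum_comm]
  refine Finset.sum_congr rfl fun i' _ => ?_
  rw [Finset.sum_comm]
  exact Finset.sum_congr rfl fun k' _ => Finset.sum_congr rfl fun j _ => by ring

/-- (a) Separable bipartite states respect the local partial ordering:
`Tr(ρ₁₂(W₁⊗W₂)) ≥ Tr(ρ₁₂(W̃₁⊗W̃₂))`; and (b) if a tripartite state is detected by a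
witness `𝒲^{(k,k')}` for every pair `(k,k')`, it is not biseparable across any
bipartition, i.e. it is genuinely multipartite entangled. -/
theorem stmt_16 :
    (∀ {e₁ e₂ : ℕ} (ρ₁₂ : Matrix (Fin e₁ × Fin e₂) (Fin e₁ × Fin e₂) ℂ),
      SepState ρ₁₂ →
      ∀ (W₁ Wt₁ : Matrix (Fin e₁) (Fin e₁) ℂ) (W₂ Wt₂ : Matrix (Fin e₂) (Fin e₂) ℂ),
        (W₁ - Wt₁).PosSemidef → Wt₁.PosSemidef →
        (W₂ - Wt₂).PosSemidef → Wt₂.PosSemidef →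
        (ρ₁₂ * (Wt₁ ⊗ₖ Wt₂)).trace ≤ (ρ₁₂ * (W₁ ⊗ₖ W₂)).trace) ∧
    (∀ (ρ : Matrix (Fin d₁ × Fin d₂ × Fin d₃) (Fin d₁ × Fin d₂ × Fin d₃) ℂ),
      ρ.PosSemidef → ρ.trace = 1 →
      (∃ (W₁ Wt₁ : Matrix (Fin d₁) (Fin d₁) ℂ) (W₂ Wt₂ : Matrix (Fin d₂) (Fin d₂) ℂ),
        (W₁ - Wt₁).PosSemidef ∧ Wt₁.PosSemidef ∧ (W₂ - Wt₂).PosSemidef ∧ Wt₂.PosSemidef ∧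
        (pad12 (d₃ := d₃) (W₁ ⊗ₖ W₂ - Wt₁ ⊗ₖ Wt₂) * ρ).trace < 0) →
      (∃ (W₁ Wt₁ : Matrix (Fin d₁) (Fin d₁) ℂ) (W₃ Wt₃ : Matrix (Fin d₃) (Fin d₃) ℂ),
        (W₁ - Wt₁).PosSemidef ∧ Wt₁.PosSemidef ∧ (W₃ - Wt₃).PosSemidef ∧ Wt₃.PosSemidef ∧
        (pad13 (d₂ := d₂) (W₁ ⊗ₖ W₃ - Wt₁ ⊗ₖ Wt₃) * ρ).trace < 0) →
      (∃ (W₂ Wt₂ : Matrix (Fin d₂) (Fin d₂) ℂ) (W₃ Wt₃ : Matrix (Fin d₃) (Fin d₃) ℂ),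
        (W₂ - Wt₂).PosSemidef ∧ Wt₂.PosSemidef ∧ (W₃ - Wt₃).PosSemidef ∧ Wt₃.PosSemidef ∧
        (pad23 (d₁ := d₁) (W₂ ⊗ₖ W₃ - Wt₂ ⊗ₖ Wt₃) * ρ).trace < 0) →
      ¬ (Bisep1 ρ ∨ Bisep2 ρ ∨ Bisep3 ρ)) := by
  constructor
  · intro e₁ e₂ ρ₁₂ hsep W₁ Wt₁ W₂ Wt₂ h1 h1' h2 h2'
    exact sepState_le_helper ρ₁₂ hsep W₁ Wt₁ W₂ Wt₂ h1 h1' h2 h2'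
  · intro ρ hPSD htr h12 h13 h23 hcon
    rcases hcon with h | h | h
    · obtain ⟨W₁, Wt₁, W₂, Wt₂, a1, a1', a2, a2', hneg⟩ := h12
      obtain ⟨m, lam, ρA, ρB, hlam, hs, hA, hB, hrho⟩ := h
      set X := W₁ ⊗ₖ W₂ - Wt₁ ⊗ₖ Wt₂ with hX
      set ρ' := ∑ q, (lam q : ℂ) • (ρA q ⊗ₖ ptrR (ρB q)) with hρ'
      have e1 : (pad12 (d₃ := d₃) X * ρ).trace = (X * ρ').trace := by
        rw [hrho, hρ', Matrix.mul_sum, Matrix.mul_sum, Matrix.trace_sum, Matrix.trace_sum]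
        refine Finset.sum_congr rfl fun q _ => ?_
        rw [Matrix.mul_smul, Matrix.mul_smul, Matrix.trace_smul, Matrix.trace_smul,
          trace_pad12_split1]
      have hsep' : SepState ρ' :=
        ⟨m, lam, ρA, fun q => ptrR (ρB q), hlam, hs, hA,
          fun q => ⟨ptrR_posSemidef (hB q).1, by rw [ptrR_trace]; exact (hB q).2⟩, hρ'⟩
      have hle := sepState_le_helper ρ' hsep' W₁ Wt₁ W₂ Wt₂ a1 a1' a2 a2'
      have hge : 0 ≤ (pad12 (d₃ := d₃) X * ρ).trace := by
        rw [e1, Matrix.trace_mul_comm, hX, Matrix.mul_sub, Matrix.trace_sub]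
        exact sub_nonneg.mpr hle
      exact hneg.not_ge hge
    · obtain ⟨W₁, Wt₁, W₂, Wt₂, a1, a1', a2, a2', hneg⟩ := h12
      obtain ⟨m, lam, ρA, ρB, hlam, hs, hA, hB, hrho⟩ := h
      set X := W₁ ⊗ₖ W₂ - Wt₁ ⊗ₖ Wt₂ with hX
      set ρ' := ∑ q, (lam q : ℂ) • (ptrR (ρB q) ⊗ₖ ρA q) with hρ'
      have e1 : (pad12 (d₃ := d₃) X * ρ).trace = (X * ρ').trace := by
        rw [hrho, hρ', Matrix.mul_sum, Matrix.mul_sum, Matrix.trace_sum, Matrix.trace_sum]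
        refine Finset.sum_congr rfl fun q _ => ?_
        rw [Matrix.mul_smul, Matrix.mul_smul, Matrix.trace_smul, Matrix.trace_smul,
          trace_pad12_split2]
      have hsep' : SepState ρ' :=
        ⟨m, lam, fun q => ptrR (ρB q), ρA, hlam, hs,
          fun q => ⟨ptrR_posSemidef (hB q).1, by rw [ptrR_trace]; exact (hB q).2⟩, hA, hρ'⟩
      have hle := sepState_le_helper ρ' hsep' W₁ Wt₁ W₂ Wt₂ a1 a1' a2 a2'
      have hge : 0 ≤ (pad12 (d₃ := d₃) X * ρ).trace := by
        rw [e1, Matrix.trace_mul_comm, hX, Matrix.mul_sub, Matrix.trace_sub]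
        exact sub_nonneg.mpr hle
      exact hneg.not_ge hge
    · obtain ⟨W₁, Wt₁, W₃, Wt₃, a1, a1', a2, a2', hneg⟩ := h13
      obtain ⟨m, lam, ρA, ρB, hlam, hs, hA, hB, hrho⟩ := h
      set X := W₁ ⊗ₖ W₃ - Wt₁ ⊗ₖ Wt₃ with hX
      set ρ' := ∑ q, (lam q : ℂ) • (ptrR (ρB q) ⊗ₖ ρA q) with hρ'
      have e1 : (pad13 (d₂ := d₂) X * ρ).trace = (X * ρ').trace := by
        rw [hrho, hρ', Matrix.mul_sum, Matrix.mul_sum, Matrix.trace_sum, Matrix.trace_sum]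
        refine Finset.sum_congr rfl fun q _ => ?_
        rw [Matrix.mul_smul, Matrix.mul_smul, Matrix.trace_smul, Matrix.trace_smul,
          trace_pad13_split3]
      have hsep' : SepState ρ' :=
        ⟨m, lam, fun q => ptrR (ρB q), ρA, hlam, hs,
          fun q => ⟨ptrR_posSemidef (hB q).1, by rw [ptrR_trace]; exact (hB q).2⟩, hA, hρ'⟩
      have hle := sepState_le_helper ρ' hsep' W₁ Wt₁ W₃ Wt₃ a1 a1' a2 a2'
      have hge : 0 ≤ (pad13 (d₂ := d₂) X * ρ).trace := by
        rw [e1, Matrix.trace_mul_comm, hX, Matrix.mul_sub, Matrix.trace_sub]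
        exact sub_nonneg.mpr hle
      exact hneg.not_ge hge

end
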